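/- arXiv:1907.00196 — 5 statements merged into one kernel-verified Lean document; each statement's English description precedes it below -/
import Mathlib

section
/- For every natural number N ≥ 2 and every t > e_{[N-1]}, the sum ∑_{k=1}^{N-1} ∏_{s=1}^{k} 1/log_{[s]}(t) is strictly less than 1. In particular, (N-1)/e_{[N-2]} ≤ 1 for all N ≥ 2. -/
/-- Tower of exponentials: `e_[0] = 1`, `e_[N] = exp (e_[N-1])`. -/
noncomputable def towerE : ℕ → ℝ
  | 0 => 1
  | n + 1 => Real.exp (towerE n)

/-- `N`-fold iterated logarithm. -/
noncomputable def iterLog (N : ℕ) (t : ℝ) : ℝ := Real.log^[N] t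

lemma towerE_pos (n : ℕ) : 0 < towerE n := by
  cases n with
  | zero => norm_num [towerE]
  | succ n => exact Real.exp_pos _

lemma succ_le_towerE (n : ℕ) : (n : ℝ) + 1 ≤ towerE n := by
  induction n with
  | zero => norm_num [towerE]
  | succ n ih =>
    have h2 : Real.exp (towerE n) ≥ towerE n + 1 := by
      have := Real.add_one_le_exp (towerE n); linarith
    have h3 : towerE (n + 1) = Real.exp (towerE n) := rfl
    rw [h3]; push_cast; linarith

lemma one_le_towerE (n : ℕ) : 1 ≤ towerE n := by
  have := succ_le_towerE n
  have : (0:ℝ) ≤ n := Nat.cast_nonneg n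
  nlinarith [succ_le_towerE n]

lemma iterLog_gt (m s : ℕ) (t : ℝ) (h : towerE (m + s) < t) :
    towerE m < iterLog s t := by
  induction s generalizing t with
  | zero => simpa [iterLog] using h
  | succ s ih =>
    have h' : Real.exp (towerE (m + s)) < t := by
      have : towerE (m + s + 1) = Real.exp (towerE (m + s)) := rfl
      rw [← this]; exact_mod_cast h
    have hlog : towerE (m + s) < Real.log t := by
      have := Real.log_lt_log (Real.exp_pos (towerE (m + s))) h'
      simpa using this
    have := ih (Real.log t) hlog
    simpa [iterLog, Function.iterate_succ_apply] using this

theorem sum_prod_inv_iterLog_lt_one (N : ℕ) (hN : 2 ≤ N) :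
    (∀ t : ℝ, towerE (N - 1) < t →
      ∑ k ∈ Finset.Icc 1 (N - 1), ∏ s ∈ Finset.Icc 1 k, (iterLog s t)⁻¹ < 1) ∧
    ((N : ℝ) - 1) / towerE (N - 2) ≤ 1 := by
  set m := N - 1 with hm
  have hm1 : 1 ≤ m := by omega
  constructor
  · intro t ht
    -- key lower bounds on iterated logs
    have key : ∀ s, 1 ≤ s → s ≤ m → towerE (m - s) < iterLog s t := by
      intro s h1 h2
      have hrw : m - s + s = m := Nat.sub_add_cancel h2
      exact iterLog_gt (m - s) s t (by rw [hrw]; exact ht)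
    have hgt1 : ∀ s, 1 ≤ s → s ≤ m → 1 < iterLog s t := by
      intro s h1 h2
      exact lt_of_le_of_lt (one_le_towerE _) (key s h1 h2)
    have hlogt : (m : ℝ) < Real.log t := by
      have h1 := key 1 le_rfl hm1
      have h2 : ((m - 1 : ℕ) : ℝ) + 1 = (m : ℝ) := by
        rw [Nat.cast_sub hm1]; push_cast; ring
      have h3 : (m : ℝ) ≤ towerE (m - 1) := by
        rw [← h2]; exact succ_le_towerE (m - 1)
      have h4 : iterLog 1 t = Real.log t := by simp [iterLog]
      rw [h4] at h1
      linarith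
    have hmpos : (0:ℝ) < m := by exact_mod_cast hm1
    have hlogpos : (0:ℝ) < Real.log t := lt_trans hmpos hlogt
    -- each term bounded by (log t)⁻¹
    have term_le : ∀ k ∈ Finset.Icc 1 m,
        ∏ s ∈ Finset.Icc 1 k, (iterLog s t)⁻¹ ≤ (Real.log t)⁻¹ := by
      intro k hk
      rw [Finset.mem_Icc] at hk
      have h1mem : 1 ∈ Finset.Icc 1 k := Finset.mem_Icc.mpr ⟨le_rfl, hk.1⟩
      rw [← Finset.mul_prod_erase _ _ h1mem]
      have hrest : ∏ s ∈ (Finset.Icc 1 k).erase 1, (iterLog s t)⁻¹ ≤ 1 := by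
        apply Finset.prod_le_one
        · intro s hs
          have hs' := Finset.mem_Icc.mp (Finset.mem_of_mem_erase hs)
          have := hgt1 s hs'.1 (le_trans hs'.2 hk.2)
          positivity
        · intro s hs
          have hs' := Finset.mem_Icc.mp (Finset.mem_of_mem_erase hs)
          have h := hgt1 s hs'.1 (le_trans hs'.2 hk.2)
          rw [inv_le_one_iff₀]
          right; linarith
      have h4 : iterLog 1 t = Real.log t := by simp [iterLog]
      rw [h4]
      calc (Real.log t)⁻¹ * ∏ s ∈ (Finset.Icc 1 k).erase 1, (iterLog s t)⁻¹
          ≤ (Real.log t)⁻¹ * 1 := by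
            apply mul_le_mul_of_nonneg_left hrest (by positivity)
        _ = (Real.log t)⁻¹ := mul_one _
    have hsum : ∑ k ∈ Finset.Icc 1 m, ∏ s ∈ Finset.Icc 1 k, (iterLog s t)⁻¹
        ≤ (m : ℝ) * (Real.log t)⁻¹ := by
      have := Finset.sum_le_card_nsmul (Finset.Icc 1 m) _ _ term_le
      rwa [Nat.card_Icc, Nat.add_sub_cancel, nsmul_eq_mul] at this
    have hlt : (m : ℝ) * (Real.log t)⁻¹ < 1 := by
      rw [← div_eq_mul_inv, div_lt_one hlogpos]
      exact hlogt
    exact lt_of_le_of_lt hsum hlt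
  · rw [div_le_one (towerE_pos _)]
    have h2 : ((N - 2 : ℕ) : ℝ) + 1 = (N : ℝ) - 1 := by
      rw [Nat.cast_sub hN]; push_cast; ring
    rw [← h2]
    exact succ_le_towerE (N - 2)
end

section
/- For every natural number N ≥ 1, the second derivative of G_N at any t > e_{[N-1]} equals (1/t) · (∏_{j=1}^{N-1} 1/log_{[j]}(t)) · (1 − ∑_{k=1}^{N-1} ∏_{s=1}^{k} 1/log_{[s]}(t)), and this quantity is strictly positive. -/
/-- `G_N(t) = 0` for `t ≤ e_[N-1]` and `G_N(t) = t · log_[N](t)` for `t > e_[N-1]`. -/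
noncomputable def G (N : ℕ) (t : ℝ) : ℝ :=
  if t ≤ towerE (N - 1) then 0 else t * iterLog N t

lemma iterLog_zero (t : ℝ) : iterLog 0 t = t := rfl

lemma iterLog_succ' (n : ℕ) (t : ℝ) : iterLog (n + 1) t = Real.log (iterLog n t) := by
  simp [iterLog, Function.iterate_succ_apply']

lemma iterLog_succ (n : ℕ) (t : ℝ) : iterLog (n + 1) t = iterLog n (Real.log t) := by
  simp [iterLog, Function.iterate_succ_apply]

lemma lt_iterLog {n : ℕ} {t : ℝ} (ht : towerE n < t) :
    ∀ j, j ≤ n → towerE (n - j) < iterLog j t := by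
  intro j hj
  induction j with
  | zero => simpa [iterLog_zero] using ht
  | succ j ih =>
    have hj' : j ≤ n := Nat.le_of_succ_le hj
    have h1 : towerE (n - j) < iterLog j t := ih hj'
    have hnj : n - j = (n - (j + 1)) + 1 := by omega
    rw [hnj] at h1
    have := Real.log_lt_log (Real.exp_pos _) (by simpa [towerE] using h1)
    rw [Real.log_exp] at this
    simpa [iterLog_succ'] using this

lemma one_lt_iterLog {n j : ℕ} {t : ℝ} (hj : j ≤ n) (ht : towerE n < t) :
    1 < iterLog j t :=
  lt_of_le_of_lt (one_le_towerE _) (lt_iterLog ht j hj)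

lemma iterLog_pos {n j : ℕ} {t : ℝ} (hj : j ≤ n) (ht : towerE n < t) :
    0 < iterLog j t := lt_trans zero_lt_one (one_lt_iterLog hj ht)

/-- Icc 1 n products as range products. -/
lemma prod_Icc_one (n : ℕ) (f : ℕ → ℝ) :
    ∏ k ∈ Finset.Icc 1 n, f k = ∏ i ∈ Finset.range n, f (i + 1) := by
  induction n with
  | zero => simp
  | succ n ih => rw [Finset.prod_Icc_succ_top (by omega), ih, Finset.prod_range_succ]

lemma sum_Icc_one (n : ℕ) (f : ℕ → ℝ) :
    ∑ k ∈ Finset.Icc 1 n, f k = ∑ i ∈ Finset.range n, f (i + 1) := by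
  induction n with
  | zero => simp
  | succ n ih => rw [Finset.sum_Icc_succ_top (by omega), ih, Finset.sum_range_succ]

lemma prod_range_iterLog (n : ℕ) (t : ℝ) :
    ∏ j ∈ Finset.range (n + 1), (iterLog j t)⁻¹
      = t⁻¹ * ∏ j ∈ Finset.Icc 1 n, (iterLog j t)⁻¹ := by
  rw [prod_Icc_one, Finset.prod_range_succ']
  rw [iterLog_zero, mul_comm]

lemma hasDerivAt_iterLog (n : ℕ) (t : ℝ) (h : ∀ j, j < n → iterLog j t ≠ 0) :
    HasDerivAt (iterLog n) (∏ j ∈ Finset.range n, (iterLog j t)⁻¹) t := by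
  induction n with
  | zero => simpa [show iterLog 0 = id from rfl] using hasDerivAt_id t
  | succ n ih =>
    have hfun : iterLog (n + 1) = fun s => Real.log (iterLog n s) := by
      funext s; exact iterLog_succ' n s
    have hd := (Real.hasDerivAt_log (h n (Nat.lt_succ_self n))).comp t
      (ih fun j hj => h j (Nat.lt_succ_of_lt hj))
    rw [hfun, Finset.prod_range_succ, mul_comm]
    exact hd

/-- shift identity for the inner product -/
lemma prod_shift (k : ℕ) (t : ℝ) :
    ∏ s ∈ Finset.Icc 1 (k + 1), (iterLog s t)⁻¹
      = (Real.log t)⁻¹ * ∏ s ∈ Finset.Icc 1 k, (iterLog s (Real.log t))⁻¹ := by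
  rw [prod_Icc_one, prod_Icc_one]
  have h : ∀ i, iterLog (i + 1) t = iterLog i (Real.log t) := fun i => iterLog_succ i t
  calc ∏ i ∈ Finset.range (k + 1), (iterLog (i + 1) t)⁻¹
      = ∏ i ∈ Finset.range (k + 1), (iterLog i (Real.log t))⁻¹ :=
        Finset.prod_congr rfl fun i _ => by rw [h]
    _ = (∏ i ∈ Finset.range k, (iterLog (i + 1) (Real.log t))⁻¹) * (iterLog 0 (Real.log t))⁻¹ :=
        Finset.prod_range_succ' _ _
    _ = (Real.log t)⁻¹ * ∏ i ∈ Finset.range k, (iterLog (i + 1) (Real.log t))⁻¹ := by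
        rw [iterLog_zero, mul_comm]

lemma sum_shift (m : ℕ) (t : ℝ) :
    ∑ k ∈ Finset.Icc 1 (m + 1), ∏ s ∈ Finset.Icc 1 k, (iterLog s t)⁻¹
      = (Real.log t)⁻¹ *
        (1 + ∑ k ∈ Finset.Icc 1 m, ∏ s ∈ Finset.Icc 1 k, (iterLog s (Real.log t))⁻¹) := by
  rw [sum_Icc_one]
  have h : ∀ i ∈ Finset.range (m + 1),
      ∏ s ∈ Finset.Icc 1 (i + 1), (iterLog s t)⁻¹
        = (Real.log t)⁻¹ * ∏ s ∈ Finset.Icc 1 i, (iterLog s (Real.log t))⁻¹ :=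
    fun i _ => prod_shift i t
  rw [Finset.sum_congr rfl h, ← Finset.mul_sum, Finset.sum_range_succ']
  rw [sum_Icc_one]
  simp [add_comm]

lemma sum_lt_one (m : ℕ) : ∀ t : ℝ, towerE m < t →
    (∑ k ∈ Finset.Icc 1 m, ∏ s ∈ Finset.Icc 1 k, (iterLog s t)⁻¹) < 1 ∧
    1 + (∑ k ∈ Finset.Icc 1 m, ∏ s ∈ Finset.Icc 1 k, (iterLog s t)⁻¹) < t := by
  induction m with
  | zero =>
    intro t ht
    simp only [Finset.Icc_eq_empty_of_lt (by norm_num : (1:ℕ) > 0), Finset.sum_empty]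
    constructor
    · norm_num
    · simpa [towerE] using ht
  | succ m ih =>
    intro t ht
    have hlog : towerE m < Real.log t := by
      have := Real.log_lt_log (Real.exp_pos _) (by simpa [towerE] using ht)
      rwa [Real.log_exp] at this
    have hlogpos : 0 < Real.log t := lt_trans (towerE_pos m) hlog
    obtain ⟨h1, h2⟩ := ih (Real.log t) hlog
    have hS : (∑ k ∈ Finset.Icc 1 (m + 1), ∏ s ∈ Finset.Icc 1 k, (iterLog s t)⁻¹) < 1 := by
      rw [sum_shift, inv_mul_eq_div, div_lt_one hlogpos]
      exact h2
    refine ⟨hS, ?_⟩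
    have he2 : (2 : ℝ) ≤ Real.exp (towerE m) := by
      have h1e : (2 : ℝ) ≤ Real.exp 1 := by
        have := Real.add_one_le_exp (1 : ℝ); linarith
      exact le_trans h1e (Real.exp_le_exp.mpr (one_le_towerE m))
    have ht2 : (2 : ℝ) < t := lt_of_le_of_lt (by simpa [towerE] using he2) ht
    linarith

lemma hasDerivAt_first {m : ℕ} {s : ℝ} (hs : towerE m < s) :
    HasDerivAt (fun x => x * iterLog (m + 1) x)
      (iterLog (m + 1) s + ∏ j ∈ Finset.Icc 1 m, (iterLog j s)⁻¹) s := by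
  have hspos : 0 < s := lt_trans (towerE_pos m) hs
  have hIt := hasDerivAt_iterLog (m + 1) s
    (fun j hj => ne_of_gt (iterLog_pos (Nat.lt_succ_iff.mp hj) hs))
  have hd := (hasDerivAt_id s).mul hIt
  have heq : (1 : ℝ) * iterLog (m + 1) s + s * ∏ j ∈ Finset.range (m + 1), (iterLog j s)⁻¹
      = iterLog (m + 1) s + ∏ j ∈ Finset.Icc 1 m, (iterLog j s)⁻¹ := by
    rw [prod_range_iterLog, one_mul, ← mul_assoc, mul_inv_cancel₀ (ne_of_gt hspos), one_mul]
  rw [← heq]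
  exact hd

lemma hasDerivAt_second {m : ℕ} {s : ℝ} (hs : towerE m < s) :
    HasDerivAt (fun x => ∏ j ∈ Finset.Icc 1 m, (iterLog j x)⁻¹)
      (-((1 / s) * (∏ j ∈ Finset.Icc 1 m, (iterLog j s)⁻¹) *
          ∑ k ∈ Finset.Icc 1 m, ∏ j ∈ Finset.Icc 1 k, (iterLog j s)⁻¹)) s := by
  classical
  have hspos : 0 < s := lt_trans (towerE_pos m) hs
  have hne : ∀ j, j ≤ m → iterLog j s ≠ 0 := fun j hj => ne_of_gt (iterLog_pos hj hs)
  have hfact : ∀ k ∈ Finset.Icc 1 m,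
      HasDerivAt (fun x => (iterLog k x)⁻¹)
        (-(∏ i ∈ Finset.range k, (iterLog i s)⁻¹) / (iterLog k s) ^ 2) s := by
    intro k hk
    have hk' : k ≤ m := (Finset.mem_Icc.mp hk).2
    exact (hasDerivAt_iterLog k s (fun j hj => hne j (le_trans hj.le hk'))).inv (hne k hk')
  have hd := HasDerivAt.fun_finsetProd hfact
  have heq : ∑ k ∈ Finset.Icc 1 m,
        (∏ j ∈ (Finset.Icc 1 m).erase k, (iterLog j s)⁻¹) •
          (-(∏ i ∈ Finset.range k, (iterLog i s)⁻¹) / (iterLog k s) ^ 2)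
      = -((1 / s) * (∏ j ∈ Finset.Icc 1 m, (iterLog j s)⁻¹) *
          ∑ k ∈ Finset.Icc 1 m, ∏ j ∈ Finset.Icc 1 k, (iterLog j s)⁻¹) := by
    have hRHS : -((1 / s) * (∏ j ∈ Finset.Icc 1 m, (iterLog j s)⁻¹) *
          ∑ k ∈ Finset.Icc 1 m, ∏ j ∈ Finset.Icc 1 k, (iterLog j s)⁻¹)
        = ∑ k ∈ Finset.Icc 1 m,
            -((1 / s) * (∏ j ∈ Finset.Icc 1 m, (iterLog j s)⁻¹) *
              ∏ j ∈ Finset.Icc 1 k, (iterLog j s)⁻¹) := by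
      rw [Finset.mul_sum, neg_eq_iff_eq_neg, ← Finset.sum_neg_distrib]
      simp
    rw [hRHS]
    refine Finset.sum_congr rfl ?_
    intro k hk
    obtain ⟨hk1, hk2⟩ := Finset.mem_Icc.mp hk
    have hLk : iterLog k s ≠ 0 := hne k hk2
    have h := Finset.prod_erase_mul (Finset.Icc 1 m) (fun j => (iterLog j s)⁻¹) hk
    have herase : ∏ j ∈ (Finset.Icc 1 m).erase k, (iterLog j s)⁻¹
        = (∏ j ∈ Finset.Icc 1 m, (iterLog j s)⁻¹) * iterLog k s := by
      rw [(eq_div_iff (inv_ne_zero hLk)).mpr h]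
      field_simp
    obtain ⟨k, rfl⟩ : ∃ k', k = k' + 1 := ⟨k - 1, by omega⟩
    rw [smul_eq_mul, herase, prod_range_iterLog,
      Finset.prod_Icc_succ_top (by omega : 1 ≤ k + 1)]
    have hs0 : s ≠ 0 := ne_of_gt hspos
    have hA : (∏ x ∈ Finset.Icc 1 m, iterLog x s) ≠ 0 :=
      Finset.prod_ne_zero_iff.mpr fun j hj => hne j (Finset.mem_Icc.mp hj).2
    have hB : (∏ x ∈ Finset.Icc 1 k, iterLog x s) ≠ 0 :=
      Finset.prod_ne_zero_iff.mpr fun j hj => hne j (le_trans (Finset.mem_Icc.mp hj).2 (by omega))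
    field_simp
  exact heq ▸ hd

theorem second_deriv_G (N : ℕ) (hN : 1 ≤ N) (t : ℝ) (ht : towerE (N - 1) < t) :
    deriv (deriv (G N)) t =
      (1 / t) * (∏ j ∈ Finset.Icc 1 (N - 1), (iterLog j t)⁻¹) *
        (1 - ∑ k ∈ Finset.Icc 1 (N - 1), ∏ s ∈ Finset.Icc 1 k, (iterLog s t)⁻¹) ∧
    0 < (1 / t) * (∏ j ∈ Finset.Icc 1 (N - 1), (iterLog j t)⁻¹) *
        (1 - ∑ k ∈ Finset.Icc 1 (N - 1), ∏ s ∈ Finset.Icc 1 k, (iterLog s t)⁻¹) := by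
  obtain ⟨m, rfl⟩ : ∃ m, N = m + 1 := ⟨N - 1, (Nat.succ_pred_eq_of_pos hN).symm⟩
  simp only [Nat.add_sub_cancel] at ht ⊢
  have ht0 : 0 < t := lt_trans (towerE_pos m) ht
  have hderiv1 : ∀ s ∈ Set.Ioi (towerE m),
      deriv (G (m + 1)) s = iterLog (m + 1) s + ∏ j ∈ Finset.Icc 1 m, (iterLog j s)⁻¹ := by
    intro s hs
    have hmem : Set.Ioi (towerE m) ∈ nhds s := isOpen_Ioi.mem_nhds hs
    have hev : G (m + 1) =ᶠ[nhds s] fun x => x * iterLog (m + 1) x :=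
      Filter.eventuallyEq_of_mem hmem fun x hx => by
        simp [G, Nat.add_sub_cancel, not_le.mpr (Set.mem_Ioi.mp hx)]
    rw [hev.deriv_eq]
    exact (hasDerivAt_first (Set.mem_Ioi.mp hs)).deriv
  have hev2 : deriv (G (m + 1)) =ᶠ[nhds t]
      fun s => iterLog (m + 1) s + ∏ j ∈ Finset.Icc 1 m, (iterLog j s)⁻¹ :=
    Filter.eventuallyEq_of_mem (isOpen_Ioi.mem_nhds ht) hderiv1
  have hdd : HasDerivAt (fun s => iterLog (m + 1) s + ∏ j ∈ Finset.Icc 1 m, (iterLog j s)⁻¹)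
      ((∏ j ∈ Finset.range (m + 1), (iterLog j t)⁻¹) +
        -((1 / t) * (∏ j ∈ Finset.Icc 1 m, (iterLog j t)⁻¹) *
          ∑ k ∈ Finset.Icc 1 m, ∏ j ∈ Finset.Icc 1 k, (iterLog j t)⁻¹)) t :=
    (hasDerivAt_iterLog (m + 1) t
      (fun j hj => ne_of_gt (iterLog_pos (Nat.lt_succ_iff.mp hj) ht))).add
      (hasDerivAt_second ht)
  have hval : deriv (deriv (G (m + 1))) t
      = (∏ j ∈ Finset.range (m + 1), (iterLog j t)⁻¹) +
        -((1 / t) * (∏ j ∈ Finset.Icc 1 m, (iterLog j t)⁻¹) *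
          ∑ k ∈ Finset.Icc 1 m, ∏ j ∈ Finset.Icc 1 k, (iterLog j t)⁻¹) := by
    rw [hev2.deriv_eq]
    exact hdd.deriv
  have hP : 0 < ∏ j ∈ Finset.Icc 1 m, (iterLog j t)⁻¹ :=
    Finset.prod_pos fun j hj => inv_pos.mpr (iterLog_pos (Finset.mem_Icc.mp hj).2 ht)
  have hS := (sum_lt_one m t ht).1
  constructor
  · rw [hval, prod_range_iterLog, inv_eq_one_div]
    ring
  · exact mul_pos (mul_pos (by positivity) hP) (by linarith)
end

section
/- Let p, q be probability densities on ℝ^d, M_q(x,R) = sup_{r∈(0,R]} I_q(x,r) with I_q(x,r) = (∫_{B(x,r)} q)/(r^d V_d), and Q_{p,q}(ε,R) = ∫ M_q(x,R)^ε p(x) dx. If Q_{p,q}(ε₁, R₁) < ∞ for some ε₁, R₁ > 0, then Q_{p,q}(ε, R) < ∞ for every ε ∈ (0, ε₁] and every R > 0. -/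
open MeasureTheory

/-- Ball average `I_q(x,r) = (∫_{B(x,r)} q)/(r^d V_d)`. -/
noncomputable def ballAvg (d : ℕ) (q : EuclideanSpace ℝ (Fin d) → ℝ)
    (x : EuclideanSpace ℝ (Fin d)) (r : ℝ) : ℝ :=
  (∫ y in Metric.closedBall x r, q y) /
    (r ^ d * (volume (Metric.closedBall (0 : EuclideanSpace ℝ (Fin d)) 1)).toReal)

/-- `M_q(x,R) = sup_{r ∈ (0,R]} I_q(x,r)`. -/
noncomputable def mUpper (d : ℕ) (q : EuclideanSpace ℝ (Fin d) → ℝ)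
    (x : EuclideanSpace ℝ (Fin d)) (R : ℝ) : ℝ :=
  ⨆ r : Set.Ioc (0 : ℝ) R, ballAvg d q x r

/-- `Q_{p,q}(ε,R) = ∫ M_q(x,R)^ε p(x) dx` (as a nonnegative extended-real integral). -/
noncomputable def Qfun (d : ℕ) (p q : EuclideanSpace ℝ (Fin d) → ℝ)
    (ε R : ℝ) : ENNReal :=
  ∫⁻ x, ENNReal.ofReal ((mUpper d q x R) ^ ε * p x)

section Aux

variable (d : ℕ) (q : EuclideanSpace ℝ (Fin d) → ℝ)

lemma myVpos : 0 < (volume (Metric.closedBall (0 : EuclideanSpace ℝ (Fin d)) 1)).toReal := by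
  refine ENNReal.toReal_pos ?_ ?_
  · exact (Metric.measure_closedBall_pos volume _ one_pos).ne'
  · exact measure_closedBall_lt_top.ne

lemma ballAvg_nonneg (hq0 : ∀ y, 0 ≤ q y) (x : EuclideanSpace ℝ (Fin d)) (r : ℝ)
    (hr : 0 < r) : 0 ≤ ballAvg d q x r := by
  apply div_nonneg
  · exact setIntegral_nonneg measurableSet_closedBall fun y _ => hq0 y
  · positivity

lemma ballAvg_le (hq0 : ∀ y, 0 ≤ q y) (hqi : Integrable q) (hq1 : ∫ y, q y = 1)
    (x : EuclideanSpace ℝ (Fin d)) (r : ℝ) (hr : 0 < r) :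
    ballAvg d q x r ≤
      1 / (r ^ d * (volume (Metric.closedBall (0 : EuclideanSpace ℝ (Fin d)) 1)).toReal) := by
  have hN : ∫ y in Metric.closedBall x r, q y ≤ 1 := by
    rw [← hq1]
    exact setIntegral_le_integral hqi (Filter.Eventually.of_forall hq0)
  have hD : 0 ≤ r ^ d * (volume (Metric.closedBall (0 : EuclideanSpace ℝ (Fin d)) 1)).toReal := by
    have := myVpos d
    positivity
  exact div_le_div_of_nonneg_right hN hD

lemma ballAvg_le' (hq0 : ∀ y, 0 ≤ q y) (hqi : Integrable q) (hq1 : ∫ y, q y = 1)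
    (x : EuclideanSpace ℝ (Fin d)) (r s : ℝ) (hs : 0 < s) (hsr : s ≤ r) :
    ballAvg d q x r ≤
      1 / (s ^ d * (volume (Metric.closedBall (0 : EuclideanSpace ℝ (Fin d)) 1)).toReal) := by
  have hr : 0 < r := hs.trans_le hsr
  refine (ballAvg_le d q hq0 hqi hq1 x r hr).trans ?_
  have hV := myVpos d
  apply one_div_le_one_div_of_le
  · positivity
  · have : s ^ d ≤ r ^ d := pow_le_pow_left₀ hs.le hsr d
    exact mul_le_mul_of_nonneg_right this hV.le

/-- transfer boundedness of the family between radii -/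
lemma bdd_transfer (hq0 : ∀ y, 0 ≤ q y) (hqi : Integrable q) (hq1 : ∫ y, q y = 1)
    (x : EuclideanSpace ℝ (Fin d)) {R R' : ℝ} (hR : 0 < R) (hR' : 0 < R')
    (h : BddAbove (Set.range fun r : Set.Ioc (0:ℝ) R => ballAvg d q x r)) :
    BddAbove (Set.range fun r : Set.Ioc (0:ℝ) R' => ballAvg d q x r) := by
  obtain ⟨b, hb⟩ := h
  refine ⟨max b (1 / (R ^ d * (volume (Metric.closedBall (0 : EuclideanSpace ℝ (Fin d)) 1)).toReal)), ?_⟩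
  rintro _ ⟨⟨r, hr0, hrR'⟩, rfl⟩
  by_cases hle : r ≤ R
  · exact le_max_of_le_left (hb ⟨⟨r, hr0, hle⟩, rfl⟩)
  · push_neg at hle
    exact le_max_of_le_right (ballAvg_le' d q hq0 hqi hq1 x r R hR hle.le)

lemma mUpper_nonneg (hq0 : ∀ y, 0 ≤ q y) (x : EuclideanSpace ℝ (Fin d)) (R : ℝ) :
    0 ≤ mUpper d q x R := by
  apply Real.iSup_nonneg
  rintro ⟨r, hr0, hrR⟩
  exact ballAvg_nonneg d q hq0 x r hr0

lemma mUpper_le (hq0 : ∀ y, 0 ≤ q y) (hqi : Integrable q) (hq1 : ∫ y, q y = 1)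
    (x : EuclideanSpace ℝ (Fin d)) {R R₁ : ℝ} (hR : 0 < R) (hR₁ : 0 < R₁) :
    mUpper d q x R ≤ max (mUpper d q x R₁)
      (1 / (R₁ ^ d * (volume (Metric.closedBall (0 : EuclideanSpace ℝ (Fin d)) 1)).toReal)) := by
  by_cases h : BddAbove (Set.range fun r : Set.Ioc (0:ℝ) R => ballAvg d q x r)
  · have h₁ := bdd_transfer d q hq0 hqi hq1 x hR hR₁ h
    have hne : Nonempty (Set.Ioc (0:ℝ) R) := (Set.nonempty_Ioc.mpr hR).to_subtype
    apply ciSup_le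
    rintro ⟨r, hr0, hrR⟩
    by_cases hle : r ≤ R₁
    · exact le_max_of_le_left (le_ciSup h₁ (⟨r, hr0, hle⟩ : Set.Ioc (0:ℝ) R₁))
    · push_neg at hle
      exact le_max_of_le_right (ballAvg_le' d q hq0 hqi hq1 x r R₁ hR₁ hle.le)
  · rw [mUpper, Real.iSup_of_not_bddAbove h]
    have hV := myVpos d
    refine le_max_of_le_right ?_
    positivity

end Aux

/-- If `Q_{p,q}(ε₁,R₁) < ∞` for some `ε₁, R₁ > 0` then `Q_{p,q}(ε,R) < ∞` for all
`ε ∈ (0,ε₁]` and all `R > 0`. -/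
theorem Qfun_finite_of_finite (d : ℕ) (hd : 1 ≤ d)
    (p q : EuclideanSpace ℝ (Fin d) → ℝ)
    (hp0 : ∀ x, 0 ≤ p x) (hpmeas : Measurable p) (hp1 : ∫ x, p x = 1)
    (hq0 : ∀ x, 0 ≤ q x) (hqmeas : Measurable q) (hq1 : ∫ x, q x = 1)
    (ε₁ R₁ : ℝ) (hε₁ : 0 < ε₁) (hR₁ : 0 < R₁)
    (hfin : Qfun d p q ε₁ R₁ ≠ ⊤) :
    ∀ ε : ℝ, 0 < ε → ε ≤ ε₁ → ∀ R : ℝ, 0 < R → Qfun d p q ε R ≠ ⊤ := by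
  intro ε hε hεε₁ R hR
  have hqi : Integrable q := by
    by_contra h
    rw [integral_undef h] at hq1; norm_num at hq1
  have hpi : Integrable p := by
    by_contra h
    rw [integral_undef h] at hp1; norm_num at hp1
  set V := (volume (Metric.closedBall (0 : EuclideanSpace ℝ (Fin d)) 1)).toReal with hV
  have hVpos : 0 < V := myVpos d
  set C : ℝ := 1 / (R₁ ^ d * V) with hC
  have hC0 : 0 ≤ C := by positivity
  set K : ℝ := C ^ ε₁ + 1 with hK
  have hK0 : 0 ≤ K := by positivity
  -- pointwise bound
  have key : ∀ x, mUpper d q x R ^ ε ≤ mUpper d q x R₁ ^ ε₁ + K := by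
    intro x
    have hM0 : 0 ≤ mUpper d q x R := mUpper_nonneg d q hq0 x R
    have hM10 : 0 ≤ mUpper d q x R₁ := mUpper_nonneg d q hq0 x R₁
    have hle : mUpper d q x R ≤ max (mUpper d q x R₁) C :=
      mUpper_le d q hq0 hqi hq1 x hR hR₁
    have hmax0 : 0 ≤ max (mUpper d q x R₁) C := le_max_of_le_right hC0
    have step1 : mUpper d q x R ^ ε ≤ (max (mUpper d q x R₁) C) ^ ε₁ + 1 := by
      rcases le_total (mUpper d q x R) 1 with h1 | h1
      · have : mUpper d q x R ^ ε ≤ 1 := Real.rpow_le_one hM0 h1 hε.le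
        have h2 : (0:ℝ) ≤ (max (mUpper d q x R₁) C) ^ ε₁ := Real.rpow_nonneg hmax0 _
        linarith
      · have h2 : mUpper d q x R ^ ε ≤ mUpper d q x R ^ ε₁ :=
          Real.rpow_le_rpow_of_exponent_le h1 hεε₁
        have h3 : mUpper d q x R ^ ε₁ ≤ (max (mUpper d q x R₁) C) ^ ε₁ :=
          Real.rpow_le_rpow hM0 hle hε₁.le
        linarith
    have step2 : (max (mUpper d q x R₁) C) ^ ε₁ ≤ mUpper d q x R₁ ^ ε₁ + C ^ ε₁ := by
      rcases le_total (mUpper d q x R₁) C with h | h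
      · rw [max_eq_right h]
        have : (0:ℝ) ≤ mUpper d q x R₁ ^ ε₁ := Real.rpow_nonneg hM10 _
        linarith
      · rw [max_eq_left h]
        have : (0:ℝ) ≤ C ^ ε₁ := Real.rpow_nonneg hC0 _
        linarith
    have : (0:ℝ) ≤ C ^ ε₁ := Real.rpow_nonneg hC0 _
    rw [hK]; linarith
  -- integral bound
  have hbound : Qfun d p q ε R ≤ Qfun d p q ε₁ R₁ + ENNReal.ofReal K * ∫⁻ x, ENNReal.ofReal (p x) := by
    calc Qfun d p q ε R
        ≤ ∫⁻ x, ENNReal.ofReal ((mUpper d q x R₁ ^ ε₁ + K) * p x) := by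
          apply lintegral_mono
          intro x
          exact ENNReal.ofReal_le_ofReal (mul_le_mul_of_nonneg_right (key x) (hp0 x))
      _ = ∫⁻ x, (ENNReal.ofReal (mUpper d q x R₁ ^ ε₁ * p x) + ENNReal.ofReal (K * p x)) := by
          congr 1; funext x
          rw [add_mul, ENNReal.ofReal_add]
          · exact mul_nonneg (Real.rpow_nonneg (mUpper_nonneg d q hq0 x R₁) _) (hp0 x)
          · exact mul_nonneg hK0 (hp0 x)
      _ = Qfun d p q ε₁ R₁ + ∫⁻ x, ENNReal.ofReal (K * p x) := by
          rw [lintegral_add_right]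
          · rfl
          · exact (measurable_const.mul hpmeas).ennreal_ofReal
      _ = Qfun d p q ε₁ R₁ + ENNReal.ofReal K * ∫⁻ x, ENNReal.ofReal (p x) := by
          congr 1
          simp_rw [ENNReal.ofReal_mul hK0]
          exact lintegral_const_mul' _ _ ENNReal.ofReal_ne_top
  have hp_lint : ∫⁻ x, ENNReal.ofReal (p x) = 1 := by
    rw [← ofReal_integral_eq_lintegral_ofReal hpi (Filter.Eventually.of_forall hp0), hp1,
      ENNReal.ofReal_one]
  rw [hp_lint, mul_one] at hbound
  intro htop
  rw [htop] at hbound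
  exact (ENNReal.add_lt_top.mpr ⟨hfin.lt_top, ENNReal.ofReal_lt_top⟩).ne (top_le_iff.mp hbound)
end

section
/- Let p, q be probability densities on ℝ^d. Suppose Q_{p,q}(ε₁,R₁) = ∫ M_q(x,R₁)^{ε₁} p(x)dx < ∞ and T_{p,q}(ε₂,R₂) = ∫ m_q(x,R₂)^{−ε₂} p(x)dx < ∞ for some positive ε₁, ε₂, R₁, R₂. Then ∫_{ℝ^d} p(x)·|log q(x)| dx ≤ (1/ε₁)·Q_{p,q}(ε₁,R₁) + (1/ε₂)·T_{p,q}(ε₂,R₂) < ∞. -/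
open MeasureTheory

/-- `m_q(x,R) = inf_{r ∈ (0,R]} I_q(x,r)`. -/
noncomputable def mLower (d : ℕ) (q : EuclideanSpace ℝ (Fin d) → ℝ)
    (x : EuclideanSpace ℝ (Fin d)) (R : ℝ) : ℝ :=
  ⨅ r : Set.Ioc (0 : ℝ) R, ballAvg d q x r

/-- `T_{p,q}(ε,R) = ∫ m_q(x,R)^{-ε} p(x) dx` with `1/0 = ∞`. -/
noncomputable def Tfun (d : ℕ) (p q : EuclideanSpace ℝ (Fin d) → ℝ)
    (ε R : ℝ) : ENNReal :=
  ∫⁻ x, (ENNReal.ofReal (mLower d q x R)) ^ (-ε) * ENNReal.ofReal (p x)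

open MeasureTheory Metric Filter

variable {d : ℕ}

lemma myMeasLInt (q : EuclideanSpace ℝ (Fin d) → ℝ) (hq : Measurable q) (r : ℝ) :
    Measurable fun x : EuclideanSpace ℝ (Fin d) =>
      ∫⁻ y in closedBall x r, ENNReal.ofReal (q y) := by
  have h : ∀ x : EuclideanSpace ℝ (Fin d),
      ∫⁻ y in closedBall x r, ENNReal.ofReal (q y)
        = (volume.withDensity fun y => ENNReal.ofReal (q y)) (closedBall x r) := fun x =>
    (withDensity_apply _ measurableSet_closedBall).symm
  simp_rw [h]
  have hs : MeasurableSet {p : EuclideanSpace ℝ (Fin d) × EuclideanSpace ℝ (Fin d) |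
      dist p.2 p.1 ≤ r} :=
    measurableSet_le (measurable_dist.comp (measurable_snd.prodMk measurable_fst))
      measurable_const
  have h2 := measurable_measure_prodMk_left
    (ν := volume.withDensity fun y => ENNReal.ofReal (q y)) hs
  exact h2

lemma myMeasBallAvg (q : EuclideanSpace ℝ (Fin d) → ℝ) (hq0 : ∀ x, 0 ≤ q x)
    (hq : Measurable q) (r : ℝ) :
    Measurable fun x : EuclideanSpace ℝ (Fin d) => ballAvg d q x r := by
  have h : ∀ x : EuclideanSpace ℝ (Fin d), ballAvg d q x r
      = (∫⁻ y in closedBall x r, ENNReal.ofReal (q y)).toReal /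
        (r ^ d * (volume (closedBall (0 : EuclideanSpace ℝ (Fin d)) 1)).toReal) := by
    intro x
    rw [ballAvg, integral_eq_lintegral_of_nonneg_ae (Eventually.of_forall fun y => hq0 y)
      hq.aestronglyMeasurable]
  simp_rw [h]
  exact ((myMeasLInt q hq r).ennreal_toReal).div_const _

/-- If `Q_{p,q}(ε₁,R₁) < ∞` and `T_{p,q}(ε₂,R₂) < ∞`, then
`∫ p(x)|log q(x)| dx ≤ (1/ε₁) Q_{p,q}(ε₁,R₁) + (1/ε₂) T_{p,q}(ε₂,R₂) < ∞`. -/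
theorem integral_abs_log_bound (d : ℕ) (hd : 1 ≤ d)
    (p q : EuclideanSpace ℝ (Fin d) → ℝ)
    (hp0 : ∀ x, 0 ≤ p x) (hpmeas : Measurable p) (hp1 : ∫ x, p x = 1)
    (hq0 : ∀ x, 0 ≤ q x) (hqmeas : Measurable q) (hq1 : ∫ x, q x = 1)
    (ε₁ R₁ ε₂ R₂ : ℝ) (hε₁ : 0 < ε₁) (hR₁ : 0 < R₁) (hε₂ : 0 < ε₂) (hR₂ : 0 < R₂)
    (hQ : Qfun d p q ε₁ R₁ ≠ ⊤) (hT : Tfun d p q ε₂ R₂ ≠ ⊤) :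
    (∫⁻ x, ENNReal.ofReal (p x * |Real.log (q x)|))
        ≤ ENNReal.ofReal (1 / ε₁) * Qfun d p q ε₁ R₁
          + ENNReal.ofReal (1 / ε₂) * Tfun d p q ε₂ R₂ ∧
    ENNReal.ofReal (1 / ε₁) * Qfun d p q ε₁ R₁
        + ENNReal.ofReal (1 / ε₂) * Tfun d p q ε₂ R₂ < ⊤ := by
  set V : ℝ := (volume (Metric.closedBall (0 : EuclideanSpace ℝ (Fin d)) 1)).toReal with hVdef
  have hV : 0 < V := ENNReal.toReal_pos
    (measure_closedBall_pos volume (0 : EuclideanSpace ℝ (Fin d)) one_pos).ne' measure_closedBall_lt_top.ne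
  have hqInt : Integrable q := by
    by_contra h
    rw [integral_undef h] at hq1
    exact one_ne_zero hq1.symm
  -- volume of closed balls
  have hvol : ∀ (x : EuclideanSpace ℝ (Fin d)) (r : ℝ), 0 ≤ r →
      (volume (Metric.closedBall x r)).toReal = r ^ d * V := by
    intro x r hr
    rw [Measure.addHaar_closedBall' volume x hr, ENNReal.toReal_mul,
      ENNReal.toReal_ofReal (pow_nonneg hr _), finrank_euclideanSpace_fin]
  -- ballAvg as an average
  have havg : ∀ (x : EuclideanSpace ℝ (Fin d)) (r : ℝ), 0 < r →
      ballAvg d q x r = ⨍ y in Metric.closedBall x r, q y := by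
    intro x r hr
    rw [setAverage_eq, smul_eq_mul, ballAvg, measureReal_def, hvol x r hr.le, div_eq_inv_mul]
  -- ballAvg is nonnegative
  have hnn : ∀ (x : EuclideanSpace ℝ (Fin d)) (r : ℝ), 0 ≤ ballAvg d q x r := by
    intro x r
    rcases le_or_gt 0 r with h | h
    · exact div_nonneg (setIntegral_nonneg measurableSet_closedBall fun y _ => hq0 y)
        (mul_nonneg (pow_nonneg h _) ENNReal.toReal_nonneg)
    · simp [ballAvg, Metric.closedBall_eq_empty.2 h]
  -- Lebesgue differentiation
  have hTendAll : ∀ᵐ x : EuclideanSpace ℝ (Fin d), Filter.Tendsto (fun r => ballAvg d q x r)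
      (nhdsWithin 0 (Set.Ioi 0)) (nhds (q x)) := by
    filter_upwards [IsUnifLocDoublingMeasure.ae_tendsto_average
      (μ := (volume : Measure (EuclideanSpace ℝ (Fin d)))) hqInt.locallyIntegrable 1] with x hx
    have hmem : ∀ᶠ r in nhdsWithin (0:ℝ) (Set.Ioi 0),
        x ∈ Metric.closedBall x (1 * r) := by
      filter_upwards [self_mem_nhdsWithin] with r hr
      have h0 : (0:ℝ) ≤ 1 * r := by simpa using le_of_lt hr
      exact Metric.mem_closedBall_self h0
    have h := hx (fun _ : ℝ => x) id Filter.tendsto_id hmem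
    apply h.congr'
    filter_upwards [self_mem_nhdsWithin] with r hr
    exact (havg x r hr).symm
  -- sequences of radii
  have hseq : ∀ {R : ℝ}, 0 < R → Filter.Tendsto (fun n : ℕ => R / (n + 1))
      Filter.atTop (nhdsWithin 0 (Set.Ioi 0)) := by
    intro R hR
    apply tendsto_nhdsWithin_of_tendsto_nhds_of_eventually_within
    · have h := tendsto_one_div_add_atTop_nhds_zero_nat.const_mul R
      rw [mul_zero] at h
      apply h.congr
      intro n; ring
    · exact Filter.Eventually.of_forall fun n => Set.mem_Ioi.2 (by positivity)
  have hmem₁ : ∀ n : ℕ, R₁ / (n + 1) ∈ Set.Ioc (0:ℝ) R₁ := fun n =>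
    ⟨by positivity, div_le_self hR₁.le (by have := Nat.cast_nonneg (α := ℝ) n; linarith)⟩
  have hmem₂ : ∀ n : ℕ, R₂ / (n + 1) ∈ Set.Ioc (0:ℝ) R₂ := fun n =>
    ⟨by positivity, div_le_self hR₂.le (by have := Nat.cast_nonneg (α := ℝ) n; linarith)⟩
  set F : EuclideanSpace ℝ (Fin d) → ENNReal :=
    fun x => ⨆ n : ℕ, ENNReal.ofReal (ballAvg d q x (R₁ / (n + 1))) with hFdef
  set G : EuclideanSpace ℝ (Fin d) → ENNReal :=
    fun x => ⨅ n : ℕ, ENNReal.ofReal (ballAvg d q x (R₂ / (n + 1))) with hGdef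
  have hFmeas : Measurable F :=
    Measurable.iSup fun n => (myMeasBallAvg q hq0 hqmeas _).ennreal_ofReal
  have hGmeas : Measurable G :=
    Measurable.iInf fun n => (myMeasBallAvg q hq0 hqmeas _).ennreal_ofReal
  -- everywhere: ofReal (mLower) ≤ G
  have hbddBelow : ∀ (x : EuclideanSpace ℝ (Fin d)),
      BddBelow (Set.range fun r : Set.Ioc (0:ℝ) R₂ => ballAvg d q x r) := by
    intro x
    refine ⟨0, ?_⟩
    rintro _ ⟨r, rfl⟩
    exact hnn x r
  have hmG : ∀ x, ENNReal.ofReal (mLower d q x R₂) ≤ G x := fun x =>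
    le_iInf fun n => ENNReal.ofReal_le_ofReal
      (ciInf_le (hbddBelow x) ⟨R₂ / (n + 1), hmem₂ n⟩)
  -- a.e. facts from differentiation
  have hae : ∀ᵐ x : EuclideanSpace ℝ (Fin d),
      ENNReal.ofReal (q x) ≤ F x ∧ G x ≤ ENNReal.ofReal (q x) ∧
      F x ≤ ENNReal.ofReal (mUpper d q x R₁) ∧ 0 ≤ mUpper d q x R₁ := by
    filter_upwards [hTendAll] with x hx
    have h1 : Filter.Tendsto (fun n : ℕ => ENNReal.ofReal (ballAvg d q x (R₁ / (n + 1))))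
        Filter.atTop (nhds (ENNReal.ofReal (q x))) :=
      (ENNReal.continuous_ofReal.tendsto _).comp (hx.comp (hseq hR₁))
    have h2 : Filter.Tendsto (fun n : ℕ => ENNReal.ofReal (ballAvg d q x (R₂ / (n + 1))))
        Filter.atTop (nhds (ENNReal.ofReal (q x))) :=
      (ENNReal.continuous_ofReal.tendsto _).comp (hx.comp (hseq hR₂))
    have hev : ∀ᶠ r in nhdsWithin (0:ℝ) (Set.Ioi 0), ballAvg d q x r < q x + 1 :=
      hx.eventually_lt_const (lt_add_one _)
    obtain ⟨δ, hδ, hsub⟩ := mem_nhdsGT_iff_exists_Ioo_subset.1 hev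
    have hδ0 : (0:ℝ) < δ := hδ
    have hBdd : BddAbove (Set.range fun r : Set.Ioc (0:ℝ) R₁ => ballAvg d q x r) := by
      refine ⟨max (q x + 1) (1 / (δ ^ d * V)), ?_⟩
      rintro _ ⟨⟨r, hr0, hrR⟩, rfl⟩
      dsimp only
      rcases lt_or_ge r δ with hrδ | hrδ
      · exact le_max_of_le_left (hsub ⟨hr0, hrδ⟩).le
      · refine le_max_of_le_right ?_
        have hnum : ∫ y in Metric.closedBall x r, q y ≤ 1 := by
          rw [← hq1]
          exact setIntegral_le_integral hqInt (Filter.Eventually.of_forall hq0)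
        have hden : 0 < δ ^ d * V := by positivity
        have hmono : δ ^ d * V ≤ r ^ d * V :=
          mul_le_mul_of_nonneg_right (pow_le_pow_left₀ hδ0.le hrδ d) hV.le
        have := div_le_div₀ zero_le_one hnum hden hmono
        simpa only [ballAvg, ← hVdef] using this
    refine ⟨le_of_tendsto' h1 fun n => le_iSup (fun m : ℕ => ENNReal.ofReal (ballAvg d q x (R₁ / (m + 1)))) n,
      ge_of_tendsto' h2 fun n => iInf_le (fun m : ℕ => ENNReal.ofReal (ballAvg d q x (R₂ / (m + 1)))) n,
      iSup_le fun n => ENNReal.ofReal_le_ofReal (le_ciSup hBdd ⟨R₁ / (n + 1), hmem₁ n⟩),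
      (hnn x R₁).trans (le_ciSup hBdd ⟨R₁, ⟨hR₁, le_refl R₁⟩⟩)⟩
  -- pointwise master inequality
  have hI : ∀ᵐ x : EuclideanSpace ℝ (Fin d), ENNReal.ofReal (p x * |Real.log (q x)|) ≤
      ENNReal.ofReal (1/ε₁) * (F x ^ ε₁ * ENNReal.ofReal (p x)) +
      ENNReal.ofReal (1/ε₂) * (G x ^ (-ε₂) * ENNReal.ofReal (p x)) := by
    filter_upwards [hae] with x hx
    obtain ⟨hqF, hGq, -, -⟩ := hx
    rcases le_or_gt 1 (q x) with h1 | h1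
    · have hre : p x * |Real.log (q x)| ≤ 1/ε₁ * ((q x) ^ ε₁ * p x) := by
        rw [abs_of_nonneg (Real.log_nonneg h1)]
        calc p x * Real.log (q x) ≤ p x * ((q x) ^ ε₁ / ε₁) :=
              mul_le_mul_of_nonneg_left (Real.log_le_rpow_div (hq0 x) hε₁) (hp0 x)
          _ = 1/ε₁ * ((q x) ^ ε₁ * p x) := by ring
      refine le_trans (ENNReal.ofReal_le_ofReal hre) (le_trans ?_ le_self_add)
      rw [ENNReal.ofReal_mul (by positivity), ENNReal.ofReal_mul (Real.rpow_nonneg (hq0 x) _),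
        ← ENNReal.ofReal_rpow_of_nonneg (hq0 x) hε₁.le]
      exact mul_le_mul_right (mul_le_mul_left (ENNReal.rpow_le_rpow hqF hε₁.le) _) _
    · rcases eq_or_lt_of_le (hq0 x) with h0 | h0
      · rw [← h0, Real.log_zero, abs_zero, mul_zero, ENNReal.ofReal_zero]
        exact zero_le
      · have hre : p x * |Real.log (q x)| ≤ 1/ε₂ * ((q x) ^ (-ε₂) * p x) := by
          rw [abs_of_nonpos (Real.log_nonpos (hq0 x) h1.le), ← Real.log_inv]
          calc p x * Real.log (q x)⁻¹ ≤ p x * ((q x) ^ (-ε₂) / ε₂) := by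
                refine mul_le_mul_of_nonneg_left ?_ (hp0 x)
                have h := Real.log_le_rpow_div (inv_nonneg.2 (hq0 x)) hε₂
                rwa [Real.inv_rpow (hq0 x), ← Real.rpow_neg (hq0 x)] at h
            _ = 1/ε₂ * ((q x) ^ (-ε₂) * p x) := by ring
        refine le_trans (ENNReal.ofReal_le_ofReal hre) (le_trans ?_ le_add_self)
        rw [ENNReal.ofReal_mul (by positivity), ENNReal.ofReal_mul (Real.rpow_nonneg (hq0 x) _),
          ← ENNReal.ofReal_rpow_of_pos h0]
        have hmono : (ENNReal.ofReal (q x)) ^ (-ε₂) ≤ G x ^ (-ε₂) := by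
          rw [ENNReal.rpow_neg, ENNReal.rpow_neg]
          exact ENNReal.inv_le_inv.2 (ENNReal.rpow_le_rpow hGq hε₂.le)
        exact mul_le_mul_right (mul_le_mul_left hmono _) _
  have hII : ∀ᵐ x : EuclideanSpace ℝ (Fin d),
      F x ^ ε₁ * ENNReal.ofReal (p x) ≤ ENNReal.ofReal ((mUpper d q x R₁) ^ ε₁ * p x) := by
    filter_upwards [hae] with x hx
    obtain ⟨-, -, hFM, hM0⟩ := hx
    rw [ENNReal.ofReal_mul (Real.rpow_nonneg hM0 _), ← ENNReal.ofReal_rpow_of_nonneg hM0 hε₁.le]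
    exact mul_le_mul_left (ENNReal.rpow_le_rpow hFM hε₁.le) _
  have hIII : ∀ x : EuclideanSpace ℝ (Fin d), G x ^ (-ε₂) * ENNReal.ofReal (p x) ≤
      (ENNReal.ofReal (mLower d q x R₂)) ^ (-ε₂) * ENNReal.ofReal (p x) := by
    intro x
    refine mul_le_mul_left ?_ _
    rw [ENNReal.rpow_neg, ENNReal.rpow_neg]
    exact ENNReal.inv_le_inv.2 (ENNReal.rpow_le_rpow (hmG x) hε₂.le)
  have hmeas1 : Measurable fun x => ENNReal.ofReal (1/ε₁) * (F x ^ ε₁ * ENNReal.ofReal (p x)) :=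
    measurable_const.mul
      ((ENNReal.continuous_rpow_const.measurable.comp hFmeas).mul hpmeas.ennreal_ofReal)
  constructor
  · calc ∫⁻ x, ENNReal.ofReal (p x * |Real.log (q x)|)
        ≤ ∫⁻ x, (ENNReal.ofReal (1/ε₁) * (F x ^ ε₁ * ENNReal.ofReal (p x)) +
            ENNReal.ofReal (1/ε₂) * (G x ^ (-ε₂) * ENNReal.ofReal (p x))) :=
          lintegral_mono_ae hI
      _ = ENNReal.ofReal (1/ε₁) * (∫⁻ x, F x ^ ε₁ * ENNReal.ofReal (p x)) +
          ENNReal.ofReal (1/ε₂) * (∫⁻ x, G x ^ (-ε₂) * ENNReal.ofReal (p x)) := by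
          rw [lintegral_add_left hmeas1, lintegral_const_mul' _ _ ENNReal.ofReal_ne_top,
            lintegral_const_mul' _ _ ENNReal.ofReal_ne_top]
      _ ≤ ENNReal.ofReal (1/ε₁) * Qfun d p q ε₁ R₁ + ENNReal.ofReal (1/ε₂) * Tfun d p q ε₂ R₂ :=
          add_le_add (mul_le_mul_right (lintegral_mono_ae hII) _)
            (mul_le_mul_right (lintegral_mono hIII) _)
  · exact ENNReal.add_lt_top.2
      ⟨ENNReal.mul_lt_top ENNReal.ofReal_lt_top hQ.lt_top,
       ENNReal.mul_lt_top ENNReal.ofReal_lt_top hT.lt_top⟩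
end

section
/- Fix l ∈ ℕ, d ∈ ℕ, and x ∈ ℝ^d a Lebesgue point of the density q with q(x) > 0. For u > 0 and m ≥ l, let F_{m,l,x}(u) = 1 − ∑_{s=0}^{l−1} C(m,s)·W_{m,x}(u)^s·(1 − W_{m,x}(u))^{m−s} where W_{m,x}(u) = ∫_{B(x,(u/m)^{1/d})} q(z)dz. Then for each fixed u > 0, F_{m,l,x}(u) → 1 − ∑_{s=0}^{l−1} ((V_d·u·q(x))^s / s!)·e^{−V_d·u·q(x)} as m → ∞; i.e., the limit is the Gamma(rate V_d·q(x), shape l) distribution function. -/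
open MeasureTheory

open Filter Real


lemma poisson_term_tendsto (W : ℕ → ℝ) (lam : ℝ) (hlam : 0 < lam)
    (hW0 : ∀ m, 0 ≤ W m)
    (hmW : Tendsto (fun m : ℕ => (m : ℝ) * W m) atTop (nhds lam)) (s : ℕ) :
    Tendsto (fun m : ℕ => (m.choose s : ℝ) * W m ^ s * (1 - W m) ^ (m - s))
      atTop (nhds (lam ^ s / s.factorial * Real.exp (-lam))) := by
  -- W m → 0
  have hW0' : Tendsto W atTop (nhds 0) := by
    have h1 : Tendsto (fun m : ℕ => ((m : ℝ) * W m) / m) atTop (nhds 0) :=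
      hmW.div_atTop tendsto_natCast_atTop_atTop
    apply h1.congr'
    filter_upwards [eventually_ge_atTop 1] with m hm
    have : (m : ℝ) ≠ 0 := by positivity
    field_simp
  -- eventually W m > 0
  have hpos : ∀ᶠ m : ℕ in atTop, 0 < W m := by
    have := hmW.eventually (eventually_gt_nhds (by linarith : lam / 2 < lam))
    filter_upwards [this, eventually_ge_atTop 1] with m h1 h2
    by_contra h
    push_neg at h
    have : W m = 0 := le_antisymm h (hW0 m)
    rw [this] at h1; simp at h1; linarith
  have hlt1 : ∀ᶠ m : ℕ in atTop, W m < 1 / 2 :=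
    hW0'.eventually (eventually_lt_nhds (by norm_num : (0:ℝ) < 1/2))
  -- binomial part: choose m s * W m ^ s → lam ^ s / s!
  have hbin : Tendsto (fun m : ℕ => (m.choose s : ℝ) * W m ^ s) atTop
      (nhds (lam ^ s / s.factorial)) := by
    have hprod : Tendsto (fun m : ℕ => ∏ i ∈ Finset.range s, (1 - (i : ℝ) / m)) atTop
        (nhds 1) := by
      have h : ∀ i ∈ Finset.range s, Tendsto (fun m : ℕ => 1 - (i : ℝ) / m) atTop
          (nhds 1) := by
        intro i _
        have : Tendsto (fun m : ℕ => 1 - (i : ℝ) / m) atTop (nhds (1 - 0)) :=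
          tendsto_const_nhds.sub (tendsto_const_nhds.div_atTop tendsto_natCast_atTop_atTop)
        simpa using this
      have := tendsto_finset_prod (Finset.range s) h
      simpa using this
    have key : Tendsto (fun m : ℕ =>
        (∏ i ∈ Finset.range s, (1 - (i : ℝ) / m)) * ((m : ℝ) * W m) ^ s / s.factorial)
        atTop (nhds (lam ^ s / s.factorial)) := by
      have := (hprod.mul (hmW.pow s)).div_const (s.factorial : ℝ)
      simpa using this
    apply key.congr'
    filter_upwards [eventually_ge_atTop s, eventually_ge_atTop 1] with m hms hm1
    have hm0 : (m : ℝ) ≠ 0 := by positivity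
    have h1 : (m.choose s : ℝ) = (m.descFactorial s : ℝ) / s.factorial := by
      rw [Nat.descFactorial_eq_factorial_mul_choose]
      push_cast
      field_simp
    have h2 : (m.descFactorial s : ℝ) = ∏ i ∈ Finset.range s, ((m : ℝ) - i) := by
      rw [Nat.descFactorial_eq_prod_range]
      push_cast
      apply Finset.prod_congr rfl
      intro i hi
      have : i ≤ m := le_trans (le_of_lt (Finset.mem_range.mp hi)) hms
      push_cast [Nat.cast_sub this]
      ring
    have h3 : ∏ i ∈ Finset.range s, ((m : ℝ) - i) =
        (∏ i ∈ Finset.range s, (1 - (i : ℝ) / m)) * (m : ℝ) ^ s := by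
      have hc : (m : ℝ) ^ s = ∏ _i ∈ Finset.range s, (m : ℝ) := by
        simp [Finset.prod_const]
      rw [hc, ← Finset.prod_mul_distrib]
      apply Finset.prod_congr rfl
      intro i _
      field_simp
    rw [h1, h2, h3, mul_pow]
    ring
  -- exponential part : (1 - W m) ^ (m - s) → exp (-lam)
  have hexp : Tendsto (fun m : ℕ => (1 - W m) ^ (m - s)) atTop (nhds (Real.exp (-lam))) := by
    have hslope : Tendsto (fun t : ℝ => Real.log (1 - t) / t) (nhdsWithin 0 {0}ᶜ)
        (nhds (-1)) := by
      have hd : HasDerivAt (fun t : ℝ => Real.log (1 - t)) (-1) 0 := by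
        have h1 : HasDerivAt (fun t : ℝ => 1 - t) (-1) 0 := by
          simpa using (hasDerivAt_id (0:ℝ)).const_sub 1
        have h2 := (Real.hasDerivAt_log (by norm_num : (1:ℝ) - 0 ≠ 0)).comp 0 h1
        simpa [Function.comp_def] using h2
      have h3 := hasDerivAt_iff_tendsto_slope.mp hd
      apply h3.congr
      intro t
      simp [slope_def_field, Real.log_one]
    have hWne : Tendsto W atTop (nhdsWithin 0 {0}ᶜ) := by
      rw [tendsto_nhdsWithin_iff]
      refine ⟨hW0', ?_⟩
      filter_upwards [hpos] with m hm
      exact fun h => absurd h (ne_of_gt hm)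
    have hlog : Tendsto (fun m : ℕ => ((m : ℝ) - s) * Real.log (1 - W m)) atTop
        (nhds (-lam)) := by
      have hA : Tendsto (fun m : ℕ =>
          (1 - (s : ℝ) / m) * ((m : ℝ) * W m) * (Real.log (1 - W m) / W m)) atTop
          (nhds (1 * lam * (-1))) := by
        refine Tendsto.mul (Tendsto.mul ?_ hmW) (hslope.comp hWne)
        have : Tendsto (fun m : ℕ => 1 - (s : ℝ) / m) atTop (nhds (1 - 0)) :=
          tendsto_const_nhds.sub (tendsto_const_nhds.div_atTop tendsto_natCast_atTop_atTop)
        simpa using this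
      have hA' := hA
      rw [show (1 : ℝ) * lam * (-1) = -lam by ring] at hA'
      apply hA'.congr'
      filter_upwards [hpos, eventually_ge_atTop 1] with m hWm hm1
      have hm0 : (m : ℝ) ≠ 0 := by positivity
      have hW0m : W m ≠ 0 := ne_of_gt hWm
      field_simp
    have hcomp := (Real.continuous_exp.tendsto _).comp hlog
    apply hcomp.congr'
    filter_upwards [hpos, hlt1, eventually_ge_atTop s] with m hWm h12 hms
    have h1 : (0:ℝ) < 1 - W m := by linarith
    have : (1 - W m) ^ (m - s) = Real.exp (((m - s : ℕ) : ℝ) * Real.log (1 - W m)) := by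
      rw [Real.exp_nat_mul, Real.exp_log h1]
    rw [this, Nat.cast_sub hms]
    rfl
  have := hbin.mul hexp
  simpa [mul_assoc] using this


/-- Convergence of the conditional nearest-neighbor distribution functions to the
Gamma distribution function at a Lebesgue point. If `x` is a Lebesgue point of the
density `q` with `q(x) > 0`, then for every fixed `u > 0`,
`F_{m,l,x}(u) = 1 - ∑_{s<l} C(m,s) W_{m,x}(u)^s (1 - W_{m,x}(u))^{m-s}`
converges, as `m → ∞`, to `1 - ∑_{s<l} ((V_d u q(x))^s/s!) e^{-V_d u q(x)}`. -/
theorem F_mlx_tendsto_gamma (d : ℕ) (hd : 1 ≤ d) (l : ℕ) (hl : 1 ≤ l)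
    (q : EuclideanSpace ℝ (Fin d) → ℝ) (hq0 : ∀ z, 0 ≤ q z)
    (hqmeas : Measurable q) (hq1 : ∫ z, q z = 1)
    (x : EuclideanSpace ℝ (Fin d)) (hqx : 0 < q x)
    (hLeb : Filter.Tendsto
      (fun r : ℝ => (∫ z in Metric.closedBall x r, |q z - q x|) /
        (volume (Metric.closedBall x r)).toReal)
      (nhdsWithin 0 (Set.Ioi 0)) (nhds 0))
    (u : ℝ) (hu : 0 < u) :
    Filter.Tendsto
      (fun m : ℕ => 1 - ∑ s ∈ Finset.range l, (m.choose s : ℝ)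
          * (∫ z in Metric.closedBall x ((u / m) ^ ((1 : ℝ) / d)), q z) ^ s
          * (1 - ∫ z in Metric.closedBall x ((u / m) ^ ((1 : ℝ) / d)), q z) ^ (m - s))
      Filter.atTop
      (nhds (1 - ∑ s ∈ Finset.range l,
        ((volume (Metric.closedBall (0 : EuclideanSpace ℝ (Fin d)) 1)).toReal
            * u * q x) ^ s / (Nat.factorial s)
          * Real.exp (-((volume (Metric.closedBall (0 : EuclideanSpace ℝ (Fin d)) 1)).toReal
            * u * q x)))) := by
  set V : ℝ := (volume (Metric.closedBall (0 : EuclideanSpace ℝ (Fin d)) 1)).toReal with hVdef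
  set W : ℕ → ℝ := fun m => ∫ z in Metric.closedBall x ((u / m) ^ ((1 : ℝ) / d)), q z
    with hWdef
  set lam : ℝ := V * u * q x with hlamdef
  -- basic positivity facts
  have hd0 : (d : ℝ) ≠ 0 := by positivity
  have hVpos : 0 < V := by
    refine ENNReal.toReal_pos ?_ ?_
    · exact (Metric.measure_closedBall_pos volume 0 one_pos).ne'
    · exact (MeasureTheory.measure_closedBall_lt_top).ne
  have hlampos : 0 < lam := by positivity
  have hqInt : Integrable q := by
    by_contra h
    rw [MeasureTheory.integral_undef h] at hq1
    norm_num at hq1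
  have hr_pos : ∀ m : ℕ, 1 ≤ m → (0:ℝ) < (u / m) ^ ((1:ℝ)/d) := by
    intro m hm
    have : (0:ℝ) < u / m := div_pos hu (by exact_mod_cast Nat.pos_of_ne_zero (by omega))
    exact Real.rpow_pos_of_pos this _
  -- volume of the ball of radius (u/m)^(1/d)
  have hvol : ∀ m : ℕ, 1 ≤ m →
      (volume (Metric.closedBall x ((u / m) ^ ((1:ℝ)/d)))).toReal = (u / m) * V := by
    intro m hm
    have hum : (0:ℝ) < u / m := div_pos hu (by exact_mod_cast Nat.pos_of_ne_zero (by omega))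
    have hr0 : (0:ℝ) ≤ (u / m) ^ ((1:ℝ)/d) := (hr_pos m hm).le
    rw [MeasureTheory.Measure.addHaar_closedBall' _ _ hr0, ENNReal.toReal_mul,
      ENNReal.toReal_ofReal (by positivity)]
    congr 1
    have hrank : Module.finrank ℝ (EuclideanSpace ℝ (Fin d)) = d := finrank_euclideanSpace_fin
    rw [hrank, ← Real.rpow_natCast ((u / m) ^ ((1:ℝ)/d)) d, ← Real.rpow_mul hum.le]
    rw [show (1:ℝ)/d * d = 1 by field_simp, Real.rpow_one]
  -- the radius tends to 0 within Ioi 0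
  have hrate : Filter.Tendsto (fun m : ℕ => (u / m : ℝ) ^ ((1:ℝ)/d)) Filter.atTop
      (nhdsWithin 0 (Set.Ioi 0)) := by
    rw [tendsto_nhdsWithin_iff]
    constructor
    · have h1 : Filter.Tendsto (fun m : ℕ => (u / m : ℝ)) Filter.atTop (nhds 0) :=
        tendsto_const_nhds.div_atTop tendsto_natCast_atTop_atTop
      have h2 : ContinuousAt (fun y : ℝ => y ^ ((1:ℝ)/d)) 0 :=
        Real.continuousAt_rpow_const 0 _ (Or.inr (by positivity))
      have := h2.tendsto.comp h1
      simpa [Function.comp_def, one_div, Real.zero_rpow (inv_ne_zero hd0)] using this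
    · filter_upwards [eventually_ge_atTop 1] with m hm
      exact hr_pos m hm
  have hratio : Filter.Tendsto (fun m : ℕ =>
      (∫ z in Metric.closedBall x ((u / m : ℝ) ^ ((1:ℝ)/d)), |q z - q x|) /
        (volume (Metric.closedBall x ((u / m : ℝ) ^ ((1:ℝ)/d)))).toReal) Filter.atTop
      (nhds 0) := hLeb.comp hrate
  -- the key limit : m * W m → lam
  have hmW : Filter.Tendsto (fun m : ℕ => (m : ℝ) * W m) Filter.atTop (nhds lam) := by
    have hsq : Filter.Tendsto (fun m : ℕ => (m : ℝ) * W m - lam) Filter.atTop (nhds 0) := by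
      have hg : Filter.Tendsto (fun m : ℕ =>
          ((∫ z in Metric.closedBall x ((u / m : ℝ) ^ ((1:ℝ)/d)), |q z - q x|) /
            (volume (Metric.closedBall x ((u / m : ℝ) ^ ((1:ℝ)/d)))).toReal) * (u * V))
          Filter.atTop (nhds 0) := by simpa using hratio.mul_const (u * V)
      refine squeeze_zero_norm' ?_ hg
      · filter_upwards [eventually_ge_atTop 1] with m hm
        set B := Metric.closedBall x ((u / m : ℝ) ^ ((1:ℝ)/d)) with hBdef
        have hmpos : (0:ℝ) < m := by exact_mod_cast Nat.pos_of_ne_zero (by omega)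
        have hum : (0:ℝ) < u / m := div_pos hu hmpos
        have hvolB : (volume B).toReal = (u / m) * V := hvol m hm
        have hvolBpos : (0:ℝ) < (volume B).toReal := by rw [hvolB]; positivity
        have hBfin : volume B < ⊤ := MeasureTheory.measure_closedBall_lt_top
        have hsub : W m - (volume B).toReal * q x = ∫ z in B, (q z - q x) := by
          rw [MeasureTheory.integral_sub hqInt.integrableOn
            (MeasureTheory.integrableOn_const hBfin.ne)]
          rw [MeasureTheory.setIntegral_const]
          simp [smul_eq_mul]
          rfl
        have habs : |W m - (volume B).toReal * q x| ≤ ∫ z in B, |q z - q x| := by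
          rw [hsub]
          simpa [Real.norm_eq_abs] using
            norm_integral_le_integral_norm (μ := volume.restrict B) (fun z => q z - q x)
        have key : |(m : ℝ) * W m - lam| ≤
            ((∫ z in B, |q z - q x|) / (volume B).toReal) * (u * V) := by
          have h1 : (m : ℝ) * W m - lam = (m : ℝ) * (W m - (volume B).toReal * q x) := by
            rw [hvolB, hlamdef]; field_simp
          rw [h1, abs_mul, abs_of_nonneg hmpos.le]
          calc (m : ℝ) * |W m - (volume B).toReal * q x|
              ≤ (m : ℝ) * ∫ z in B, |q z - q x| := by
                exact mul_le_mul_of_nonneg_left habs hmpos.le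
            _ = ((∫ z in B, |q z - q x|) / (volume B).toReal) * (u * V) := by
                rw [hvolB]; field_simp
        simpa [Real.norm_eq_abs] using key
    have := hsq.add_const lam
    simpa using this
  -- assemble
  have hW0 : ∀ m, 0 ≤ W m :=
    fun m => MeasureTheory.setIntegral_nonneg measurableSet_closedBall fun z _ => hq0 z
  apply Filter.Tendsto.const_sub
  apply tendsto_finset_sum
  intro s _
  exact poisson_term_tendsto W lam hlampos hW0 hmW s
end
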